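/- Tightness of the fairness guarantee: For every n ≥ 2 and every ε ∈ (0,1), there exist fairness values ℓ and estimates ℓ̂, both satisfying the per-row CDF property and the column condition with respect to identical rankings (r_x = r for all x), with |ℓ̂_{x,k} − ℓ_{x,k}| ≤ ε/2 for all x, k, such that: ℓ_{1,1} = 1, and if ℓ̃_{x,k} = (ℓ̂_{x,k} + kε)/(nε+1), then the unique doubly stochastic matrix P̂ satisfying the 1-fairness constraints with respect to ℓ̃ assigns individual 1 her top-ranked resource with probability exactly P̂_{1, r⁻¹(1)} = (1+ε/2)/(nε+1) = ((1+ε/2)/(nε+1))·ℓ_{1,1}; i.e., the fairness level achieved with respect to ℓ is no better than (1+ε/2)/(nε+1). -/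

import Mathlib

theorem sum_filter_lt' (n k : ℕ) (hk : k ≤ n) (g : ℕ → ℝ) :
    ∑ y ∈ Finset.univ.filter (fun y : Fin n => (y:ℕ) < k), g y = ∑ i ∈ Finset.range k, g i := by
  rw [Finset.sum_filter, Fin.sum_univ_eq_sum_range (fun i => if i < k then g i else 0),
    ← Finset.sum_filter]
  congr 1
  ext i
  simp only [Finset.mem_filter, Finset.mem_range]
  omega



/-- Fairness values `ℓ x k` (for `k ∈ {0, 1, …, n}`) satisfy the per-row CDF property:
`0 = ℓ x 0 ≤ ℓ x 1 ≤ ⋯ ≤ ℓ x n = 1` for each individual `x`. -/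
def RowCDF (n : ℕ) (ℓ : Fin n → ℕ → ℝ) : Prop :=
  ∀ x : Fin n, ℓ x 0 = 0 ∧ ℓ x n = 1 ∧ ∀ k : ℕ, k < n → ℓ x k ≤ ℓ x (k + 1)

/-- The column condition: for each resource `y`,
`∑_x (ℓ_{x, r_x(y)} − ℓ_{x, r_x(y) − 1}) = 1`.
Here `r x : Fin n ≃ Fin n` gives the 0-indexed rank of each resource for individual `x`
(smaller = more preferred), so the paper's 1-indexed rank `r_x(y)` is `(r x y : ℕ) + 1`. -/
def ColCond (n : ℕ) (r : Fin n → Fin n ≃ Fin n) (ℓ : Fin n → ℕ → ℝ) : Prop :=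
  ∀ y : Fin n, ∑ x : Fin n, (ℓ x ((r x y : ℕ) + 1) - ℓ x (r x y : ℕ)) = 1

/-- The increment matrix of fairness values `ℓ`: `π_{x,y} = ℓ_{x, r_x(y)} − ℓ_{x, r_x(y) − 1}`. -/
def increment (n : ℕ) (r : Fin n → Fin n ≃ Fin n) (ℓ : Fin n → ℕ → ℝ) :
    Fin n → Fin n → ℝ :=
  fun x y => ℓ x ((r x y : ℕ) + 1) - ℓ x (r x y : ℕ)

/-- An `n × n` real matrix is doubly stochastic: nonnegative entries,
each row sums to 1 and each column sums to 1. -/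
def DoublyStochastic (n : ℕ) (P : Fin n → Fin n → ℝ) : Prop :=
  (∀ x y, 0 ≤ P x y) ∧ (∀ x, ∑ y : Fin n, P x y = 1) ∧ (∀ y, ∑ x : Fin n, P x y = 1)

/-- `P` satisfies the φ-fairness constraints with respect to fairness values `ℓ`:
for all `x` and all `k ∈ {1, …, n}`, `∑_{i=1}^k P_{x, r_x⁻¹(i)} ≥ φ · ℓ_{x,k}`.
The sum over the top-`k` ranked resources of `x` is the sum over resources
of 0-indexed rank `< k`. -/
def FairConstraints (n : ℕ) (r : Fin n → Fin n ≃ Fin n) (φ : ℝ)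
    (ℓ : Fin n → ℕ → ℝ) (P : Fin n → Fin n → ℝ) : Prop :=
  ∀ x : Fin n, ∀ k : ℕ, 1 ≤ k → k ≤ n →
    φ * ℓ x k ≤ ∑ y ∈ Finset.univ.filter (fun y : Fin n => (r x y : ℕ) < k), P x y

/-- The principal's utility of a matrix `P` with respect to utilities `μ`. -/
def Util (n : ℕ) (μ P : Fin n → Fin n → ℝ) : ℝ :=
  ∑ x : Fin n, ∑ y : Fin n, μ x y * P x y

/-- Tightness of the fairness guarantee (Proposition 5, fairness part): for every `n ≥ 2`
and `ε ∈ (0,1)` there are fairness values `ℓ` and estimates `ℓ̂` within `ε/2` of `ℓ`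
(both CDF rows and column condition, for identical rankings `r`) with `ℓ_{1,1} = 1`, such
that a doubly stochastic matrix that is 1-fair w.r.t. `ℓ̃_{x,k} = (ℓ̂_{x,k} + kε)/(nε+1)`
exists, and every such matrix `P̂` assigns individual 1 her top-ranked resource with
probability exactly `(1+ε/2)/(nε+1) = ((1+ε/2)/(nε+1))·ℓ_{1,1}`. -/
theorem tightness_fairness (n : ℕ) (hn : 2 ≤ n) (ε : ℝ) (hε0 : 0 < ε) (hε1 : ε < 1) :
    ∃ (r : Fin n ≃ Fin n) (ℓ ℓhat : Fin n → ℕ → ℝ),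
      RowCDF n ℓ ∧ ColCond n (fun _ => r) ℓ ∧
      RowCDF n ℓhat ∧ ColCond n (fun _ => r) ℓhat ∧
      (∀ x : Fin n, ∀ k : ℕ, k ≤ n → |ℓhat x k - ℓ x k| ≤ ε / 2) ∧
      ℓ ⟨0, by omega⟩ 1 = 1 ∧
      (∃ Phat : Fin n → Fin n → ℝ, DoublyStochastic n Phat ∧
        FairConstraints n (fun _ => r) 1
          (fun x k => (ℓhat x k + k * ε) / (n * ε + 1)) Phat) ∧
      (∀ Phat : Fin n → Fin n → ℝ, DoublyStochastic n Phat →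
        FairConstraints n (fun _ => r) 1
          (fun x k => (ℓhat x k + k * ε) / (n * ε + 1)) Phat →
        Phat ⟨0, by omega⟩ (r.symm ⟨0, by omega⟩) = (1 + ε / 2) / (n * ε + 1) ∧
          Phat ⟨0, by omega⟩ (r.symm ⟨0, by omega⟩) =
            ((1 + ε / 2) / (n * ε + 1)) * ℓ ⟨0, by omega⟩ 1) := by
  
  have hpos : (0:ℝ) < n * ε + 1 := by
    have : (0:ℝ) ≤ (n:ℝ) * ε := by positivity
    linarith
  set a : Fin n := ⟨0, by omega⟩ with ha
  set b : Fin n := ⟨1, by omega⟩ with hb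
  have hab : a ≠ b := by simp [ha, hb, Fin.ext_iff]
  set ℓ : Fin n → ℕ → ℝ := fun x k => if (x:ℕ) < k then 1 else 0 with hℓ
  set δ : Fin n → ℕ → ℝ := fun x k =>
    (if k = 1 ∧ x = a then -(ε/2) else 0) + (if k = 1 ∧ x = b then ε/2 else 0) with hδ
  set L : Fin n → ℕ → ℝ := fun x k => ℓ x k + δ x k with hL
  have hsumℓ : ∀ k, k ≤ n → ∑ x : Fin n, ℓ x k = (k:ℝ) := by
    intro k hk
    have := sum_filter_lt' n k hk (fun _ => (1:ℝ))
    rw [Finset.sum_filter] at this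
    rw [hℓ]; rw [this]; simp
  have hsumδ : ∀ k, ∑ x : Fin n, δ x k = 0 := by
    intro k
    by_cases hk1 : k = 1
    · simp only [hδ, hk1, true_and, Finset.sum_add_distrib,
        Finset.sum_ite_eq' Finset.univ, Finset.mem_univ, if_true]
      ring
    · simp [hδ, hk1]
  have hsumL : ∀ k, k ≤ n → ∑ x : Fin n, L x k = (k:ℝ) := by
    intro k hk
    rw [hL]
    rw [Finset.sum_add_distrib, hsumℓ k hk, hsumδ k, add_zero]
  -- RowCDF ℓ
  have hcdfℓ : ∀ x : Fin n, ℓ x 0 = 0 ∧ ℓ x n = 1 ∧ ∀ k : ℕ, k < n → ℓ x k ≤ ℓ x (k+1) := by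
    intro x
    refine ⟨by simp [hℓ], by simp [hℓ, x.isLt], ?_⟩
    intro k _
    by_cases hx : (x:ℕ) < k
    · simp [hℓ, hx, Nat.lt_succ_of_lt hx]
    · by_cases hx2 : (x:ℕ) < k+1 <;> simp [hℓ, hx, hx2]
  -- δ values
  have hδ0 : ∀ x : Fin n, ∀ k, k ≠ 1 → δ x k = 0 := by
    intro x k hk; simp [hδ, hk]
  have hδa : δ a 1 = -(ε/2) := by simp [hδ, hab]
  have hδb : δ b 1 = ε/2 := by simp [hδ, hab.symm]
  have hδother : ∀ x : Fin n, x ≠ a → x ≠ b → δ x 1 = 0 := by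
    intro x h1 h2; simp [hδ, h1, h2]
  have hℓval : ∀ x : Fin n, ∀ k, ℓ x k = if (x:ℕ) < k then 1 else 0 := fun x k => by rw [hℓ]
  have hℓnn : ∀ x : Fin n, ∀ k, 0 ≤ ℓ x k := by
    intro x k; rw [hℓval]; split <;> norm_num
  have hℓle1 : ∀ x : Fin n, ∀ k, ℓ x k ≤ 1 := by
    intro x k; rw [hℓval]; split <;> norm_num
  have hLne : ∀ x : Fin n, ∀ k, k ≠ 1 → L x k = ℓ x k := by
    intro x k h; rw [hL]; simp only; rw [hδ0 x k h, add_zero]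
  have hLa1 : L a 1 = 1 - ε/2 := by
    have h1 : ℓ a 1 = 1 := by rw [hℓval]; simp [ha]
    rw [hL]; simp only; rw [hδa, h1]; ring
  have hLb1 : L b 1 = ε/2 := by
    have h1 : ℓ b 1 = 0 := by rw [hℓval]; simp [hb]
    rw [hL]; simp only; rw [hδb, h1]; ring
  have hLo1 : ∀ x : Fin n, x ≠ a → x ≠ b → L x 1 = ℓ x 1 := by
    intro x h1 h2; rw [hL]; simp only; rw [hδother x h1 h2, add_zero]
  -- RowCDF L
  have hcdfL : ∀ x : Fin n, L x 0 = 0 ∧ L x n = 1 ∧ ∀ k : ℕ, k < n → L x k ≤ L x (k+1) := by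
    intro x
    obtain ⟨h0, hN, hm⟩ := hcdfℓ x
    refine ⟨by rw [hLne x 0 (by omega), h0], by rw [hLne x n (by omega), hN], ?_⟩
    intro k hk
    rcases Nat.lt_or_ge k 2 with hk2 | hk2
    · interval_cases k
      · rw [hLne x 0 (by omega), h0]
        by_cases hxa : x = a
        · rw [hxa, hLa1]; linarith
        · by_cases hxb : x = b
          · rw [hxb, hLb1]; linarith
          · rw [hLo1 x hxa hxb]; exact hℓnn x 1
      · rw [hLne x 2 (by omega)]
        by_cases hxa : x = a
        · rw [hxa, hLa1]
          have : ℓ a 2 = 1 := by rw [hℓval]; simp [ha]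
          rw [this]; linarith
        · by_cases hxb : x = b
          · rw [hxb, hLb1]
            have : ℓ b 2 = 1 := by rw [hℓval]; simp [hb]
            rw [this]; linarith
          · rw [hLo1 x hxa hxb]; exact hm 1 (by omega)
    · rw [hLne x k (by omega), hLne x (k+1) (by omega)]
      exact hm k hk
  -- error bound
  have herr : ∀ x : Fin n, ∀ k : ℕ, k ≤ n → |L x k - ℓ x k| ≤ ε / 2 := by
    intro x k _
    have : L x k - ℓ x k = δ x k := by rw [hL]; ring
    rw [this]
    by_cases hk1 : k = 1
    · subst hk1
      by_cases hxa : x = a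
      · rw [hxa, hδa, abs_neg, abs_of_nonneg (by linarith)]
      · by_cases hxb : x = b
        · rw [hxb, hδb, abs_of_nonneg (by linarith)]
        · rw [hδother x hxa hxb]; simp; linarith
    · rw [hδ0 x k hk1]; simp; linarith
  have hone : (1 + (n:ℝ)*ε)/((n:ℝ)*ε+1) = 1 := by
    rw [div_eq_one_iff_eq hpos.ne']; ring
  -- ColCond helper
  have hcol : ∀ f : Fin n → ℕ → ℝ, (∀ k, k ≤ n → ∑ x : Fin n, f x k = (k:ℝ)) →
      ∀ y : Fin n, ∑ x : Fin n, (f x ((y:ℕ) + 1) - f x (y:ℕ)) = 1 := by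
    intro f hf y
    rw [Finset.sum_sub_distrib, hf ((y:ℕ)+1) y.isLt, hf (y:ℕ) (le_of_lt y.isLt)]
    push_cast; ring
  have hcolℓ := hcol ℓ hsumℓ
  have hcolL := hcol L hsumL
  -- existence matrix
  set P : Fin n → Fin n → ℝ := fun x y => (L x ((y:ℕ)+1) - L x (y:ℕ) + ε)/((n:ℝ)*ε+1) with hP
  have hPnn : ∀ x y : Fin n, 0 ≤ P x y := by
    intro x y
    have := (hcdfL x).2.2 (y:ℕ) y.isLt
    rw [hP]
    exact div_nonneg (by linarith) hpos.le
  have hProw : ∀ x : Fin n, ∑ y : Fin n, P x y = 1 := by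
    intro x
    rw [hP]; simp only
    rw [← Finset.sum_div, Finset.sum_add_distrib]
    have ht : ∑ y : Fin n, (L x ((y:ℕ)+1) - L x (y:ℕ)) = L x n - L x 0 := by
      rw [Fin.sum_univ_eq_sum_range (fun i => L x (i+1) - L x i)]
      exact Finset.sum_range_sub (L x) n
    rw [ht, (hcdfL x).1, (hcdfL x).2.1, Finset.sum_const, Finset.card_univ,
      Fintype.card_fin, nsmul_eq_mul, sub_zero, hone]
  have hPcol : ∀ y : Fin n, ∑ x : Fin n, P x y = 1 := by
    intro y
    rw [hP]; simp only
    rw [← Finset.sum_div, Finset.sum_add_distrib, Finset.sum_sub_distrib,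
      hsumL ((y:ℕ)+1) y.isLt, hsumL (y:ℕ) (le_of_lt y.isLt), Finset.sum_const,
      Finset.card_univ, Fintype.card_fin, nsmul_eq_mul]
    push_cast
    rw [div_eq_one_iff_eq hpos.ne']; ring
  have hPfair : ∀ x : Fin n, ∀ k : ℕ, 1 ≤ k → k ≤ n →
      (L x k + (k:ℝ) * ε) / ((n:ℝ) * ε + 1) ≤
        ∑ y ∈ Finset.univ.filter (fun y : Fin n => (y:ℕ) < k), P x y := by
    intro x k hk1 hkn
    rw [hP]; simp only
    rw [sum_filter_lt' n k hkn (fun i => (L x (i+1) - L x i + ε)/((n:ℝ)*ε+1)),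
      ← Finset.sum_div, Finset.sum_add_distrib, Finset.sum_range_sub (L x),
      Finset.sum_const, Finset.card_range, nsmul_eq_mul, (hcdfL x).1, sub_zero]
  -- uniqueness key
  have hfilter1 : Finset.univ.filter (fun y : Fin n => (y:ℕ) < 1) = {a} := by
    ext y
    simp only [Finset.mem_filter, Finset.mem_univ, true_and, Finset.mem_singleton,
      Fin.ext_iff, ha]
    omega
  have huniq : ∀ Phat : Fin n → Fin n → ℝ,
      (∀ x, ∑ x' : Fin n, Phat x' x = 1) →
      (∀ x : Fin n, (L x 1 + ε) / ((n:ℝ)*ε+1) ≤ Phat x a) →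
      Phat a a = (1 + ε/2) / ((n:ℝ)*ε+1) := by
    intro Phat hc hge
    have hsum_eq : ∑ x : Fin n, (L x 1 + ε)/((n:ℝ)*ε+1) = ∑ x : Fin n, Phat x a := by
      rw [hc a, ← Finset.sum_div, Finset.sum_add_distrib, hsumL 1 (by omega),
        Finset.sum_const, Finset.card_univ, Fintype.card_fin, nsmul_eq_mul]
      rw [Nat.cast_one]
      rw [div_eq_one_iff_eq hpos.ne']; ring
    have := (Finset.sum_eq_sum_iff_of_le (fun x _ => hge x)).mp hsum_eq a (Finset.mem_univ a)
    rw [← this, hLa1]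
    congr 1; ring
  have hℓ01 : ℓ (⟨0, by omega⟩ : Fin n) 1 = 1 := by
    rw [hℓval]; norm_num
  refine ⟨Equiv.refl _, ℓ, L, hcdfℓ, ?_, hcdfL, ?_, herr, hℓ01, ?_, ?_⟩
  · exact hcolℓ
  · exact hcolL
  · refine ⟨P, ⟨hPnn, hProw, hPcol⟩, ?_⟩
    intro x k hk1 hkn
    simp only [Equiv.refl_apply, one_mul]
    exact hPfair x k hk1 hkn
  · intro Phat hDS hF
    obtain ⟨hnnP, hrowP, hcolP⟩ := hDS
    have hge : ∀ x : Fin n, (L x 1 + ε) / ((n:ℝ)*ε+1) ≤ Phat x a := by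
      intro x
      have h := hF x 1 le_rfl (by omega)
      simp only [Equiv.refl_apply, one_mul, Nat.cast_one] at h
      erw [hfilter1, Finset.sum_singleton] at h
      exact h
    have hval := huniq Phat hcolP hge
    refine ⟨hval, ?_⟩
    rw [hℓ01, mul_one]
    exact hval
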